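/- For every complex number s with Re(s) > 1, the series ∑_{n=1}^∞ |c(n)| n^{−s} converges absolutely and ∑_{n=1}^∞ |c(n)| n^{−s} = ζ(s)·ζ(2s−1)/ζ(2s). -/

import Mathlib

/-- The arithmetic function `c` defined by `c(n) = m·μ(k)` where `n = m²·k`
with `k` squarefree (the decomposition being unique). -/
noncomputable def paperC (n : ℕ) : ℤ :=
  ∑ d ∈ n.divisors, if d ^ 2 ∣ n ∧ Squarefree (n / d ^ 2) then
    (d : ℤ) * ArithmeticFunction.moebius (n / d ^ 2) else 0

open LSeries ArithmeticFunction Finset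
open scoped LSeries.notation

lemma aux_dvd_of_sq_dvd {n d e : ℕ} (hn : n ≠ 0) (hd : d ^ 2 ∣ n)
    (hsf : Squarefree (n / d ^ 2)) (he : e ^ 2 ∣ n) : e ∣ d := by
  have hd0 : d ≠ 0 := by
    rintro rfl
    rw [zero_pow two_ne_zero, zero_dvd_iff] at hd
    exact hn hd
  have he0 : e ≠ 0 := by
    rintro rfl
    rw [zero_pow two_ne_zero, zero_dvd_iff] at he
    exact hn he
  have hk0 : n / d ^ 2 ≠ 0 := hsf.ne_zero
  rw [← Nat.factorization_le_iff_dvd he0 hd0]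
  rw [Finsupp.le_def]
  intro p
  have hmul : d ^ 2 * (n / d ^ 2) = n := Nat.mul_div_cancel' hd
  have hfn : n.factorization p = 2 * d.factorization p + (n / d ^ 2).factorization p := by
    conv_lhs => rw [← hmul]
    rw [Nat.factorization_mul (pow_ne_zero 2 hd0) hk0, Nat.factorization_pow]
    simp [mul_comm]
  have h1 : (n / d ^ 2).factorization p ≤ 1 := hsf.natFactorization_le_one p
  have h2 : 2 * e.factorization p ≤ n.factorization p := by
    have h := (Nat.factorization_le_iff_dvd (pow_ne_zero 2 he0) hn).mpr he
    have h' := Finsupp.le_def.mp h p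
    rwa [Nat.factorization_pow, Finsupp.smul_apply, smul_eq_mul] at h'
  omega

lemma aux_sq_decomp_unique {n d e : ℕ} (hn : n ≠ 0) (hd : d ^ 2 ∣ n)
    (hsf : Squarefree (n / d ^ 2)) (he : e ^ 2 ∣ n) (hsf' : Squarefree (n / e ^ 2)) : d = e :=
  Nat.dvd_antisymm (aux_dvd_of_sq_dvd hn he hsf' hd) (aux_dvd_of_sq_dvd hn hd hsf he)

lemma paperC_eq {n d : ℕ} (hn : n ≠ 0) (hd : d ^ 2 ∣ n) (hsf : Squarefree (n / d ^ 2)) :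
    paperC n = (d : ℤ) * ArithmeticFunction.moebius (n / d ^ 2) := by
  rw [paperC, Finset.sum_eq_single_of_mem d
    (Nat.mem_divisors.mpr ⟨dvd_trans (dvd_pow_self d two_ne_zero) hd, hn⟩)]
  · rw [if_pos ⟨hd, hsf⟩]
  · intro b _ hbd
    rw [if_neg]
    rintro ⟨h1, h2⟩
    exact hbd (aux_sq_decomp_unique hn h1 h2 hd hsf)

lemma abs_paperC {n d : ℕ} (hn : n ≠ 0) (hd : d ^ 2 ∣ n) (hsf : Squarefree (n / d ^ 2)) :
    |paperC n| = (d : ℤ) := by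
  rw [paperC_eq hn hd hsf, abs_mul, Nat.abs_cast,
    ArithmeticFunction.moebius_apply_of_squarefree hsf]
  simp [abs_pow]

/-- The function supported on squares with value `φ(√n)`. -/
noncomputable def sqPhi : ℕ → ℂ :=
  fun n => if Nat.sqrt n ^ 2 = n then (Nat.totient (Nat.sqrt n) : ℂ) else 0

lemma paperC_conv (n : ℕ) : (sqPhi ⍟ 1) n = ((|paperC n| : ℤ) : ℂ) := by
  rcases eq_or_ne n 0 with rfl | hn
  · simp [convolution_map_zero, paperC]
  obtain ⟨k, d, hmul, hsf⟩ := Nat.sq_mul_squarefree n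
  have hd : d ^ 2 ∣ n := ⟨k, hmul.symm⟩
  have hd0 : d ≠ 0 := by
    rintro rfl; rw [zero_pow two_ne_zero, zero_dvd_iff] at hd; exact hn hd
  have hk : n / d ^ 2 = k := by
    rw [← hmul, Nat.mul_div_cancel_left _ (Nat.pos_of_ne_zero (pow_ne_zero 2 hd0))]
  have hsf' : Squarefree (n / d ^ 2) := hk ▸ hsf
  rw [abs_paperC hn hd hsf']
  rw [convolution_def]
  show ∑ p ∈ n.divisorsAntidiagonal, sqPhi p.1 * (1 : ℕ → ℂ) p.2 = _
  rw [Nat.sum_divisorsAntidiagonal (fun a b => sqPhi a * (1 : ℕ → ℂ) b)]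
  simp only [Pi.one_apply, mul_one]
  have key : ∑ i ∈ n.divisors, sqPhi i = ∑ e ∈ d.divisors, (Nat.totient e : ℂ) := by
    unfold sqPhi
    rw [← Finset.sum_filter]
    refine Finset.sum_nbij' (fun x => Nat.sqrt x) (fun e => e ^ 2) ?_ ?_ ?_ ?_ ?_
    · intro x hx
      rw [Finset.mem_filter, Nat.mem_divisors] at hx
      obtain ⟨⟨hxn, -⟩, hx2⟩ := hx
      exact Nat.mem_divisors.mpr
        ⟨aux_dvd_of_sq_dvd hn hd hsf' (hx2.symm ▸ hxn), hd0⟩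
    · intro e he
      rw [Nat.mem_divisors] at he
      refine Finset.mem_filter.mpr ⟨Nat.mem_divisors.mpr
        ⟨dvd_trans (pow_dvd_pow_of_dvd he.1 2) hd, hn⟩, by simp [Nat.sqrt_eq']⟩
    · intro x hx
      exact (Finset.mem_filter.mp hx).2
    · intro e _
      exact Nat.sqrt_eq' e
    · intro x _
      rfl
  rw [key, ← Nat.cast_sum, Nat.sum_totient]
  push_cast
  rfl

lemma term_id (w : ℂ) : term (fun n => (n : ℂ)) w = term (1 : ℕ → ℂ) (w - 1) := by
  funext n
  rcases eq_or_ne n 0 with rfl | hn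
  · simp [term]
  · rw [term_of_ne_zero hn, term_of_ne_zero hn, Pi.one_apply]
    have hc : (n : ℂ) ≠ 0 := Nat.cast_ne_zero.mpr hn
    have h : (n : ℂ) ^ w = (n : ℂ) ^ (w - 1) * (n : ℂ) ^ (1 : ℂ) := by
      rw [← Complex.cpow_add _ _ hc, sub_add_cancel]
    rw [h, Complex.cpow_one, mul_comm, ← div_div, div_self hc]

lemma phi_conv (n : ℕ) : ((fun m => (Nat.totient m : ℂ)) ⍟ 1) n = (n : ℂ) := by
  rcases eq_or_ne n 0 with rfl | hn
  · simp [convolution_map_zero]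
  rw [convolution_def]
  show ∑ p ∈ n.divisorsAntidiagonal, (Nat.totient p.1 : ℂ) * (1 : ℕ → ℂ) p.2 = _
  rw [Nat.sum_divisorsAntidiagonal (fun a b => (Nat.totient a : ℂ) * (1 : ℕ → ℂ) b)]
  simp only [Pi.one_apply, mul_one]
  rw [← Nat.cast_sum, Nat.sum_totient]

lemma phi_LSeries {w : ℂ} (hw : 2 < w.re) :
    LSeriesSummable (fun m => (Nat.totient m : ℂ)) w ∧
    LSeries (fun m => (Nat.totient m : ℂ)) w = riemannZeta (w - 1) / riemannZeta w := by
  have hw1 : 1 < w.re := by linarith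
  have hws : 1 < (w - 1).re := by
    rw [Complex.sub_re, Complex.one_re]; linarith
  have hid : LSeriesSummable (fun n => (n : ℂ)) w := by
    unfold LSeriesSummable
    rw [term_id]
    exact LSeriesSummable_one_iff.mpr hws
  have hidval : LSeries (fun n => (n : ℂ)) w = riemannZeta (w - 1) := by
    unfold LSeries
    rw [term_id]
    exact LSeries_one_eq_riemannZeta hws
  have hphi : LSeriesSummable (fun m => (Nat.totient m : ℂ)) w := by
    have hnorm := summable_norm_iff.mpr hid
    refine Summable.of_norm_bounded hnorm ?_
    intro n
    rcases eq_or_ne n 0 with rfl | hn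
    · simp [term]
    · rw [term_of_ne_zero hn, term_of_ne_zero hn, norm_div, norm_div]
      gcongr
      simp only [Complex.norm_natCast]
      exact_mod_cast Nat.totient_le n
  refine ⟨hphi, ?_⟩
  have hconv := LSeries_convolution' hphi (LSeriesSummable_one_iff.mpr hw1)
  rw [show ((fun m => (Nat.totient m : ℂ)) ⍟ 1) = fun n : ℕ => (n : ℂ) from funext phi_conv,
    hidval, LSeries_one_eq_riemannZeta hw1] at hconv
  have hz : riemannZeta w ≠ 0 := riemannZeta_ne_zero_of_one_lt_re hw1
  rw [eq_div_iff hz]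
  exact hconv.symm

lemma sqPhi_LSeries {s : ℂ} (hs : 1 < s.re) :
    LSeriesSummable sqPhi s ∧
    LSeries sqPhi s = riemannZeta (2 * s - 1) / riemannZeta (2 * s) := by
  have h2 : 2 < (2 * s).re := by
    have : (2 * s).re = 2 * s.re := by
      simp [Complex.mul_re]
    rw [this]; linarith
  obtain ⟨hsum, hval⟩ := phi_LSeries h2
  have hinj : Function.Injective (fun e : ℕ => e ^ 2) :=
    fun a b h => Nat.pow_left_injective (by norm_num) h
  have hterm : ∀ e, term sqPhi s (e ^ 2) = term (fun m => (Nat.totient m : ℂ)) (2 * s) e := by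
    intro e
    rcases eq_or_ne e 0 with rfl | he
    · simp [term]
    · rw [term_of_ne_zero (pow_ne_zero 2 he), term_of_ne_zero he]
      unfold sqPhi
      rw [if_pos (by simp [Nat.sqrt_eq']), Nat.sqrt_eq']
      congr 1
      rw [show ((2 : ℂ) * s) = ((2 : ℕ) : ℂ) * s by norm_num,
        Complex.natCast_cpow_natCast_mul]
      norm_cast
  have hsupp : ∀ x ∉ Set.range (fun e : ℕ => e ^ 2), term sqPhi s x = 0 := by
    intro x hx
    have hx2 : Nat.sqrt x ^ 2 ≠ x := fun h => hx ⟨Nat.sqrt x, h⟩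
    rcases eq_or_ne x 0 with rfl | hx0
    · simp [term]
    · rw [term_of_ne_zero hx0]
      unfold sqPhi
      rw [if_neg hx2, zero_div]
  have hsummable : LSeriesSummable sqPhi s := by
    unfold LSeriesSummable
    refine (hinj.summable_iff hsupp).mp ?_
    exact hsum.congr fun e => (hterm e).symm
  refine ⟨hsummable, ?_⟩
  have hts : LSeries sqPhi s = LSeries (fun m => (Nat.totient m : ℂ)) (2 * s) := by
    unfold LSeries
    rw [← hinj.tsum_eq (f := term sqPhi s)
      (fun x hx => by by_contra h; exact hx (hsupp x h))]
    exact tsum_congr hterm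
  rw [hts, hval]

/-- For `Re(s) > 1`, the series `∑ |c(n)| n^{−s}` converges absolutely and equals
`ζ(s)ζ(2s−1)/ζ(2s)`. -/
theorem stmt2 (s : ℂ) (hs : 1 < s.re) :
    Summable (fun n : ℕ => ‖((|paperC n| : ℤ) : ℂ) / (n : ℂ) ^ s‖) ∧
    ∑' n : ℕ, ((|paperC n| : ℤ) : ℂ) / (n : ℂ) ^ s
      = riemannZeta s * riemannZeta (2 * s - 1) / riemannZeta (2 * s) := by
  have hFfun : (fun n : ℕ => ((|paperC n| : ℤ) : ℂ)) = sqPhi ⍟ 1 :=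
    funext fun n => (paperC_conv n).symm
  obtain ⟨hA, hAval⟩ := sqPhi_LSeries hs
  have h1s : LSeriesSummable 1 s := LSeriesSummable_one_iff.mpr hs
  have hF : LSeriesSummable (fun n : ℕ => ((|paperC n| : ℤ) : ℂ)) s := by
    rw [hFfun]; exact hA.convolution h1s
  have hterm_eq : ∀ n : ℕ, ((|paperC n| : ℤ) : ℂ) / (n : ℂ) ^ s
      = term (fun n : ℕ => ((|paperC n| : ℤ) : ℂ)) s n := by
    intro n
    rcases eq_or_ne n 0 with rfl | hn
    · simp [term, paperC]
    · rw [term_of_ne_zero hn]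
  constructor
  · exact (summable_norm_iff.mpr hF).congr fun n => by rw [hterm_eq n]
  · rw [tsum_congr hterm_eq]
    have hL : ∑' n, term (fun n : ℕ => ((|paperC n| : ℤ) : ℂ)) s n
        = LSeries (fun n : ℕ => ((|paperC n| : ℤ) : ℂ)) s := rfl
    rw [hL, hFfun, LSeries_convolution' hA h1s, hAval, LSeries_one_eq_riemannZeta hs]
    ring
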